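/- Let q be a real number with q ≠ 0 and q ≠ 1, let n ≥ 1, and let φ_1, …, φ_n : ℝ → ℝ. Define recursively φ_j^{(0)} = φ_j and, for 1 ≤ i < j ≤ n, φ_j^{(i)} = D_{φ_i^{(i−1)}} φ_j^{(i−1)}. Assume that for each i = 1, …, n the q-Wronskian W_i^q(φ_1, …, φ_i)(x) ≠ 0 for all x ≠ 0. Then for every x ≠ 0 the product of the successive Darboux-transformed generating functions telescopes to the q-Wronskian: φ_1^{(0)}(x) · φ_2^{(1)}(x) · φ_3^{(2)}(x) ⋯ φ_n^{(n−1)}(x) = W_n^q(φ_1, …, φ_n)(x). (This expresses that the τ function produced by n steps of elementary gauge transformations from τ = 1 is the q-Wronskian W_n^q(φ_1, …, φ_n).) -/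

import Mathlib

/-- The `q`-derivative: `(∂_q f)(x) = (f(qx) − f(x))/(x(q−1))` (zero at `x = 0`). -/
noncomputable def qDeriv (q : ℝ) (f : ℝ → ℝ) : ℝ → ℝ :=
  fun x => (f (q * x) - f x) / (x * (q - 1))

/-- The q-Wronskian `W_n^q(f_1,…,f_n)(x) = det((∂_q^{i−1} f_j)(x))`. -/
noncomputable def qWronskian (q : ℝ) (n : ℕ) (f : Fin n → ℝ → ℝ) (x : ℝ) : ℝ :=
  Matrix.det (Matrix.of fun i j : Fin n => (qDeriv q)^[(i : ℕ)] (f j) x)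

/-- The Darboux transform generated by `h`: `(D_h g)(x) = h(qx)·(∂_q(g/h))(x)`. -/
noncomputable def qDarboux (q : ℝ) (h g : ℝ → ℝ) : ℝ → ℝ :=
  fun x => h (q * x) * qDeriv q (fun y => g y / h y) x

/-- The recursively Darboux-transformed family: `Φ_j^{(0)} = Φ j` and
`Φ_j^{(i+1)} = D_{Φ_{i+1}^{(i)}} Φ_j^{(i)}` (generating functions are `Φ 1, Φ 2, …`). -/
noncomputable def qDarbouxFam (q : ℝ) (Φ : ℕ → ℝ → ℝ) : ℕ → ℕ → (ℝ → ℝ)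
  | 0, j => Φ j
  | i + 1, j => qDarboux q (qDarbouxFam q Φ i (i + 1)) (qDarbouxFam q Φ i j)

namespace DJaux
open Matrix Polynomial Equiv

variable {R : Type*} [CommRing R]

def inIdx (n : ℕ) : Fin n → Fin (n+2) := fun k => k.succ.castSucc

def crIdx (n : ℕ) : Fin 2 → Fin (n+2) := fun j => if j = 0 then 0 else Fin.last (n+1)

lemma inIdx_val (n : ℕ) (k : Fin n) : ((inIdx n k : Fin (n+2)) : ℕ) = (k : ℕ) + 1 := by
  simp [inIdx]

lemma crIdx_zero (n : ℕ) : crIdx n 0 = 0 := rfl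
lemma crIdx_one (n : ℕ) : crIdx n 1 = Fin.last (n+1) := rfl

lemma crIdx_val (n : ℕ) (j : Fin 2) : ((crIdx n j : Fin (n+2)) : ℕ) = if j = 0 then 0 else n + 1 := by
  fin_cases j <;> simp [crIdx, Fin.last]

lemma inIdx_ne_cr (n : ℕ) (k : Fin n) (j : Fin 2) : inIdx n k ≠ crIdx n j := by
  intro h
  have h1 := inIdx_val n k
  have h2 := crIdx_val n j
  rw [h] at h1
  rw [h1] at h2
  have hk := k.isLt
  split at h2 <;> omega

lemma crIdx_inj (n : ℕ) : Function.Injective (crIdx n) := by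
  intro a b h
  have h2 := crIdx_val n a
  rw [h, crIdx_val] at h2
  fin_cases a <;> fin_cases b <;> simp_all

noncomputable def cEquiv (n : ℕ) : Fin n ⊕ Fin 2 ≃ Fin (n+2) :=
  Equiv.ofBijective (Sum.elim (inIdx n) (crIdx n)) <| by
    rw [Fintype.bijective_iff_injective_and_card]
    refine ⟨?_, by simp⟩
    rintro (a | a) (b | b) h <;> simp only [Sum.elim_inl, Sum.elim_inr] at h
    · congr 1
      have := congrArg (fun x : Fin (n+2) => (x : ℕ)) h
      simp only [inIdx_val] at this
      exact Fin.ext (by omega)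
    · exact absurd h (inIdx_ne_cr n a b)
    · exact absurd h.symm (inIdx_ne_cr n b a)
    · exact congrArg Sum.inr (crIdx_inj n h)

lemma cEquiv_inl (n : ℕ) (k : Fin n) : cEquiv n (Sum.inl k) = inIdx n k := rfl
lemma cEquiv_inr (n : ℕ) (j : Fin 2) : cEquiv n (Sum.inr j) = crIdx n j := rfl

/-- The key "pre-Dodgson" identity, valid over any commutative ring. -/
lemma predodgson (n : ℕ) (M : Matrix (Fin (n+2)) (Fin (n+2)) R) :
    M.det * (adjugate M 0 0 * adjugate M (Fin.last (n+1)) (Fin.last (n+1)) -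
      adjugate M 0 (Fin.last (n+1)) * adjugate M (Fin.last (n+1)) 0) =
    (M.submatrix (inIdx n) (inIdx n)).det * M.det ^ 2 := by
  classical
  set P : Matrix (Fin n ⊕ Fin 2) (Fin n ⊕ Fin 2) R := M.submatrix (cEquiv n) (cEquiv n) with hP
  set Nb : Matrix (Fin n ⊕ Fin 2) (Fin n ⊕ Fin 2) R :=
    fromBlocks 1 (Matrix.of fun k j => adjugate M (inIdx n k) (crIdx n j)) 0
      (Matrix.of fun i j => adjugate M (crIdx n i) (crIdx n j)) with hNb
  have key : P * Nb = fromBlocks (M.submatrix (inIdx n) (inIdx n)) 0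
      (Matrix.of fun i k => M (crIdx n i) (inIdx n k)) (M.det • 1) := by
    ext x y
    rw [Matrix.mul_apply]
    rcases y with y | y
    · rw [Fintype.sum_sum_type]
      have h2 : ∀ i : Fin 2, P x (Sum.inr i) * Nb (Sum.inr i) (Sum.inl y) = 0 := by
        intro i; simp [hNb, fromBlocks]
      rw [Finset.sum_congr rfl (fun i _ => h2 i)]
      have h1 : ∀ k : Fin n, P x (Sum.inl k) * Nb (Sum.inl k) (Sum.inl y)
          = if k = y then P x (Sum.inl y) else 0 := by
        intro k
        simp only [hNb, fromBlocks, Sum.elim_inl, Sum.elim_inr, Matrix.one_apply, of_apply]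
        split <;> simp_all
      rw [Finset.sum_congr rfl (fun k _ => h1 k), Finset.sum_ite_eq' Finset.univ y
        (fun _ => P x (Sum.inl y))]
      simp only [Finset.mem_univ, if_pos, Finset.sum_const_zero, add_zero]
      rcases x with x | x <;>
        simp [hP, fromBlocks, cEquiv_inl, cEquiv_inr]
    · have hterm : ∀ s : Fin n ⊕ Fin 2, P x s * Nb s (Sum.inr y)
          = M (cEquiv n x) (cEquiv n s) * adjugate M (cEquiv n s) (crIdx n y) := by
        rintro (s | s) <;>
          simp [hP, hNb, fromBlocks, cEquiv_inl, cEquiv_inr]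
      rw [Finset.sum_congr rfl (fun s _ => hterm s),
        Equiv.sum_comp (cEquiv n) (fun u => M (cEquiv n x) u * adjugate M u (crIdx n y)),
        ← Matrix.mul_apply, Matrix.mul_adjugate]
      rcases x with x | x
      · have : (cEquiv n (Sum.inl x)) ≠ crIdx n y := inIdx_ne_cr n x y
        simp only [Matrix.smul_apply, Matrix.one_apply, cEquiv_inl] at *
        rw [if_neg this]
        simp [fromBlocks]
      · simp only [cEquiv_inr, Matrix.smul_apply, Matrix.one_apply, fromBlocks, Sum.elim_inr,
          of_apply, Matrix.smul_apply]
        by_cases hxy : x = y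
        · subst hxy; simp
        · rw [if_neg (fun hc => hxy (crIdx_inj n hc))]
          simp [Matrix.one_apply, hxy]
  have hdetPNb : P.det * Nb.det = (M.submatrix (inIdx n) (inIdx n)).det * M.det ^ 2 := by
    rw [← Matrix.det_mul, key, Matrix.det_fromBlocks_zero₁₂]
    congr 1
    rw [Matrix.det_smul, Matrix.det_one]
    simp [Fintype.card_fin]
  have hdetP : P.det = M.det := Matrix.det_submatrix_equiv_self (cEquiv n) M
  have hdetNb : Nb.det = adjugate M 0 0 * adjugate M (Fin.last (n+1)) (Fin.last (n+1)) -
      adjugate M 0 (Fin.last (n+1)) * adjugate M (Fin.last (n+1)) 0 := by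
    rw [hNb, Matrix.det_fromBlocks_zero₂₁, Matrix.det_one, one_mul, Matrix.det_fin_two]
    simp [crIdx_zero, crIdx_one]
  rw [← hdetP, ← hdetNb, hdetPNb, hdetP]


/-- Desnanot–Jacobi / Dodgson condensation over ℝ. -/
lemma dodgson (n : ℕ) (M : Matrix (Fin (n+2)) (Fin (n+2)) ℝ) :
    M.det * (M.submatrix (inIdx n) (inIdx n)).det =
    (M.submatrix Fin.succ Fin.succ).det * (M.submatrix Fin.castSucc Fin.castSucc).det -
    (M.submatrix Fin.castSucc Fin.succ).det * (M.submatrix Fin.succ Fin.castSucc).det := by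
  classical
  -- first prove the identity with adjugate entries, via polynomial cancellation
  have main : M.det * (M.submatrix (inIdx n) (inIdx n)).det =
      adjugate M 0 0 * adjugate M (Fin.last (n+1)) (Fin.last (n+1)) -
      adjugate M 0 (Fin.last (n+1)) * adjugate M (Fin.last (n+1)) 0 := by
    set P : Matrix (Fin (n+2)) (Fin (n+2)) ℝ[X] := charmatrix (-M) with hPdef
    have hPne : P.det ≠ 0 := (charpoly_monic (-M)).ne_zero
    have hpre := predodgson n P
    rw [pow_two, ← mul_assoc, mul_comm (P.submatrix (inIdx n) (inIdx n)).det P.det,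
      mul_assoc] at hpre
    have hcancel : adjugate P 0 0 * adjugate P (Fin.last (n+1)) (Fin.last (n+1)) -
        adjugate P 0 (Fin.last (n+1)) * adjugate P (Fin.last (n+1)) 0 =
        P.det * (P.submatrix (inIdx n) (inIdx n)).det := by
      apply mul_left_cancel₀ hPne
      rw [hpre]
      ring
    have hmap : P.map (evalRingHom (0:ℝ)) = M := by
      ext i j
      by_cases h : i = j
      · subst h; simp [hPdef, charmatrix_apply_eq]
      · simp [hPdef, charmatrix_apply_ne _ _ _ h]
    have e1 : (evalRingHom (0:ℝ)) P.det = M.det := by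
      rw [RingHom.map_det, RingHom.mapMatrix_apply, hmap]
    have e2 : (evalRingHom (0:ℝ)) (P.submatrix (inIdx n) (inIdx n)).det
        = (M.submatrix (inIdx n) (inIdx n)).det := by
      rw [RingHom.map_det, RingHom.mapMatrix_apply, show (P.submatrix (inIdx n) (inIdx n)).map (evalRingHom (0:ℝ))
        = (P.map (evalRingHom (0:ℝ))).submatrix (inIdx n) (inIdx n) from rfl, hmap]
    have e3 : ∀ i j, (evalRingHom (0:ℝ)) (adjugate P i j) = adjugate M i j := by
      intro i j
      have h := RingHom.map_adjugate (evalRingHom (0:ℝ)) P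
      rw [RingHom.mapMatrix_apply, RingHom.mapMatrix_apply, hmap] at h
      exact (congrFun (congrFun h i) j).symm ▸ (by simp [Matrix.map_apply])
    have := congrArg (evalRingHom (0:ℝ)) hcancel
    rw [map_sub, _root_.map_mul, _root_.map_mul, _root_.map_mul, e1, e2, e3, e3, e3, e3] at this
    exact this.symm
  rw [main, adjugate_fin_succ_eq_det_submatrix, adjugate_fin_succ_eq_det_submatrix,
    adjugate_fin_succ_eq_det_submatrix, adjugate_fin_succ_eq_det_submatrix,
    Fin.succAbove_zero, Fin.succAbove_last]
  push_cast
  simp only [Fin.val_zero, Fin.val_last]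
  ring_nf
  rw [show ((-1:ℝ))^(n*2) = 1 from by rw [show n*2 = 2*n by ring, pow_mul]; norm_num]
  ring

/-- mix rows: row 0 kept, row (j+1) := row j + t * row (j+1) -/
def rowmix (t : ℝ) {ν : Type*} (k : ℕ) (Y : Matrix (Fin (k+1)) ν ℝ) : Matrix (Fin (k+1)) ν ℝ :=
  Matrix.of fun r c => Fin.cases (Y 0 c) (fun j => Y j.castSucc c + t * Y j.succ c) r

@[simp] lemma rowmix_zero (t : ℝ) {ν : Type*} (k : ℕ) (Y : Matrix (Fin (k+1)) ν ℝ) (c : ν) :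
    rowmix t k Y 0 c = Y 0 c := rfl

@[simp] lemma rowmix_succ (t : ℝ) {ν : Type*} (k : ℕ) (Y : Matrix (Fin (k+1)) ν ℝ)
    (j : Fin k) (c : ν) : rowmix t k Y j.succ c = Y j.castSucc c + t * Y j.succ c := by
  simp [rowmix]

lemma det_rowmix (t : ℝ) (k : ℕ) (Y : Matrix (Fin (k+1)) (Fin (k+1)) ℝ) :
    (rowmix t k Y).det = t ^ k * Y.det := by
  classical
  set L : Matrix (Fin (k+1)) (Fin (k+1)) ℝ :=
    Matrix.of fun r s => (if s = r then (if r = 0 then (1:ℝ) else t) else 0) +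
      (if (s : ℕ) + 1 = (r : ℕ) then (1:ℝ) else 0) with hL
  have hprod : rowmix t k Y = L * Y := by
    ext r c
    rw [Matrix.mul_apply]
    have : ∀ s : Fin (k+1), L r s * Y s c =
        (if s = r then (if r = 0 then (1:ℝ) else t) * Y s c else 0) +
        (if (s : ℕ) + 1 = (r : ℕ) then Y s c else 0) := by
      intro s
      simp only [hL, Matrix.of_apply, add_mul, ite_mul, zero_mul, one_mul]
    rw [Finset.sum_congr rfl (fun s _ => this s), Finset.sum_add_distrib,
      Finset.sum_ite_eq' Finset.univ r (fun s => (if r = 0 then (1:ℝ) else t) * Y s c)]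
    simp only [Finset.mem_univ, if_pos]
    induction r using Fin.cases with
    | zero =>
      rw [Finset.sum_eq_zero (fun s _ => by simp)]
      simp
    | succ j =>
      have hsum : ∀ s : Fin (k+1), (if (s : ℕ) + 1 = ((j.succ : Fin (k+1)) : ℕ) then Y s c else 0)
          = (if s = j.castSucc then Y s c else 0) := by
        intro s
        congr 1
        simp only [Fin.val_succ, eq_iff_iff]
        constructor
        · intro h; exact Fin.ext (by simpa using h)
        · intro h; subst h; simp
      rw [Finset.sum_congr rfl (fun s _ => hsum s),
        Finset.sum_ite_eq' Finset.univ (j.castSucc) (fun s => Y s c)]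
      simp only [Finset.mem_univ, if_pos]
      rw [rowmix_succ]
      have : (j.succ : Fin (k+1)) ≠ 0 := Fin.succ_ne_zero j
      rw [if_neg this]
      ring
  have hLdet : L.det = t ^ k := by
    have htri : L.BlockTriangular OrderDual.toDual := by
      intro i j hij
      simp only [OrderDual.toDual_lt_toDual] at hij
      simp only [hL, Matrix.of_apply]
      rw [if_neg (by intro h; subst h; exact lt_irrefl _ hij),
        if_neg (by intro h; have := Fin.lt_iff_val_lt_val.mp hij; omega)]
      ring
    rw [Matrix.det_of_lowerTriangular L htri]
    rw [Fin.prod_univ_succ]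
    have h0 : L 0 0 = 1 := by simp [hL]
    have hs : ∀ j : Fin k, L j.succ j.succ = t := by
      intro j
      show (if (j.succ : Fin (k+1)) = j.succ then (if (j.succ : Fin (k+1)) = 0 then (1:ℝ) else t)
          else 0) + (if ((j.succ : Fin (k+1)) : ℕ) + 1 = ((j.succ : Fin (k+1)) : ℕ) then (1:ℝ)
          else 0) = t
      rw [if_pos rfl, if_neg (Fin.succ_ne_zero j), if_neg (by omega), add_zero]
    rw [h0, one_mul, Finset.prod_congr rfl (fun j _ => hs j)]
    simp
  rw [hprod, Matrix.det_mul, hLdet]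

lemma det_rot (k : ℕ) (X : Matrix (Fin (k+1)) (Fin (k+1)) ℝ) :
    (X.submatrix id ⇑(finRotate (k+1)).symm).det = (-1:ℝ)^k * X.det := by
  have h : (X.submatrix id ⇑((finRotate (k+1))⁻¹)).det
      = Perm.sign ((finRotate (k+1))⁻¹) * X.det := Matrix.det_permute' _ X
  rw [Perm.sign_inv, sign_finRotate] at h
  rw [Perm.inv_def] at h
  simpa using h


/-- skip the index `m` -/
def skIdx (m : ℕ) : Fin (m+1) → Fin (m+2) := fun k =>
  if h : (k : ℕ) < m then ⟨(k : ℕ), by omega⟩ else Fin.last (m+1)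

lemma gsymm0 (k : ℕ) : (finRotate (k+2)).symm 0 = Fin.last (k+1) := by
  rw [Equiv.symm_apply_eq, finRotate_last]

lemma gsymmsucc (k : ℕ) (l : Fin (k+1)) : (finRotate (k+2)).symm l.succ = l.castSucc := by
  rw [Equiv.symm_apply_eq, finRotate_succ_apply, Fin.coeSucc_eq_succ]

lemma colfact (m : ℕ) (l : Fin (m+1)) :
    (finRotate (m+2)).symm l.castSucc = skIdx m ((finRotate (m+1)).symm l) := by
  induction l using Fin.cases with
  | zero =>
    rw [Fin.castSucc_zero, gsymm0]
    rcases m with - | m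
    · simp [skIdx]
    · rw [gsymm0, skIdx]
      rw [dif_neg (by simp [Fin.last])]
  | succ j =>
    rw [← Fin.succ_castSucc, gsymmsucc]
    rcases m with - | m
    · exact absurd j.isLt (by omega)
    · rw [gsymmsucc, skIdx]
      rw [dif_pos (by simpa using j.isLt)]
      ext
      simp

/-- The q-analogue of the Jacobi identity for Wronskian-type determinants. -/
lemma key_det (m : ℕ) (t : ℝ) (ht : t ≠ 0) (A : Matrix (Fin (m+2)) (Fin (m+2)) ℝ)
    (B : Matrix (Fin (m+1)) (Fin (m+2)) ℝ)
    (hB : ∀ r c, B r c = A r.castSucc c + t * A r.succ c) :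
    (B.submatrix id (skIdx m)).det * (A.submatrix Fin.castSucc Fin.castSucc).det
      - (A.submatrix Fin.castSucc (skIdx m)).det * (B.submatrix id Fin.castSucc).det
    = t * A.det * (B.submatrix Fin.castSucc (fun k : Fin m => k.castSucc.castSucc)).det := by
  classical
  set M' : Matrix (Fin (m+2)) (Fin (m+2)) ℝ :=
    (rowmix t (m+1) A).submatrix id ⇑(finRotate (m+2)).symm with hM'
  have e_a : M'.submatrix (inIdx m) (inIdx m)
      = B.submatrix Fin.castSucc (fun k : Fin m => k.castSucc.castSucc) := by
    ext k l
    show rowmix t (m+1) A (inIdx m k) ((finRotate (m+2)).symm (inIdx m l)) = _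
    rw [show inIdx m l = (l.castSucc).succ from (Fin.succ_castSucc l).symm, gsymmsucc,
      show inIdx m k = (k.castSucc).succ from (Fin.succ_castSucc k).symm, rowmix_succ]
    rw [Matrix.submatrix_apply, hB]
  have e_b : M'.submatrix Fin.succ Fin.succ = B.submatrix id Fin.castSucc := by
    ext k l
    show rowmix t (m+1) A k.succ ((finRotate (m+2)).symm l.succ) = _
    rw [gsymmsucc, rowmix_succ, Matrix.submatrix_apply, hB]
    rfl
  have e_c : M'.submatrix Fin.castSucc Fin.castSucc
      = (rowmix t m (A.submatrix Fin.castSucc (skIdx m))).submatrix id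
          ⇑(finRotate (m+1)).symm := by
    ext k l
    show rowmix t (m+1) A k.castSucc ((finRotate (m+2)).symm l.castSucc)
      = rowmix t m (A.submatrix Fin.castSucc (skIdx m)) k ((finRotate (m+1)).symm l)
    rw [colfact]
    induction k using Fin.cases with
    | zero => rw [Fin.castSucc_zero, rowmix_zero, rowmix_zero, Matrix.submatrix_apply,
        Fin.castSucc_zero]
    | succ j =>
      rw [← Fin.succ_castSucc, rowmix_succ, rowmix_succ, Matrix.submatrix_apply,
        Matrix.submatrix_apply, Fin.succ_castSucc]
  have e_d : M'.submatrix Fin.succ Fin.castSucc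
      = (B.submatrix id (skIdx m)).submatrix id ⇑(finRotate (m+1)).symm := by
    ext k l
    show rowmix t (m+1) A k.succ ((finRotate (m+2)).symm l.castSucc) = _
    rw [colfact, rowmix_succ]
    simp only [Matrix.submatrix_apply, id_eq]
    rw [hB]
  have e_e : M'.submatrix Fin.castSucc Fin.succ
      = rowmix t m (A.submatrix Fin.castSucc Fin.castSucc) := by
    ext k l
    show rowmix t (m+1) A k.castSucc ((finRotate (m+2)).symm l.succ) = _
    rw [gsymmsucc]
    induction k using Fin.cases with
    | zero => rw [Fin.castSucc_zero, rowmix_zero, rowmix_zero, Matrix.submatrix_apply,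
        Fin.castSucc_zero]
    | succ j =>
      rw [← Fin.succ_castSucc, rowmix_succ, rowmix_succ, Matrix.submatrix_apply,
        Matrix.submatrix_apply, Fin.succ_castSucc]
  have e_f : M'.det = (-1:ℝ)^(m+1) * (t^(m+1) * A.det) := by
    rw [hM', det_rot (m+1), det_rowmix]
  have hd := dodgson m M'
  rw [e_a, e_b, e_c, e_d, e_e, e_f] at hd
  rw [det_rot m, det_rot m, det_rowmix, det_rowmix] at hd
  set dA := A.det
  set dBin := (B.submatrix Fin.castSucc (fun k : Fin m => k.castSucc.castSucc)).det
  set dBc := (B.submatrix id Fin.castSucc).det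
  set dAsk := (A.submatrix Fin.castSucc (skIdx m)).det
  set dAc := (A.submatrix Fin.castSucc Fin.castSucc).det
  set dBsk := (B.submatrix id (skIdx m)).det
  have hd2 : ((-1:ℝ))^m * (t^m * (-(t * dA * dBin))) =
      ((-1:ℝ))^m * (t^m * (dBc * dAsk - dAc * dBsk)) := by linear_combination hd
  have hd3 := mul_left_cancel₀ (pow_ne_zero m (by norm_num : (-1:ℝ) ≠ 0)) hd2
  have hd4 := mul_left_cancel₀ (pow_ne_zero m ht) hd3
  linear_combination hd4

/-- generalized Wronskian `W(φ_1,…,φ_i,φ_j)`, an `(i+1)×(i+1)` determinant -/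
noncomputable def Wc (q : ℝ) (Φ : ℕ → ℝ → ℝ) (i j : ℕ) (x : ℝ) : ℝ :=
  Matrix.det (Matrix.of fun r c : Fin (i+1) =>
    (qDeriv q)^[(r : ℕ)] (if (c : ℕ) < i then Φ ((c : ℕ)+1) else Φ j) x)

lemma Wc_zero (q : ℝ) (Φ : ℕ → ℝ → ℝ) (j : ℕ) (x : ℝ) : Wc q Φ 0 j x = Φ j x := by
  rw [Wc, Matrix.det_fin_one]
  simp

lemma qWronskian_zero (q : ℝ) (f : Fin 0 → ℝ → ℝ) (x : ℝ) : qWronskian q 0 f x = 1 := by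
  rw [qWronskian, Matrix.det_fin_zero]

lemma Wk_succ_eq_Wc (q : ℝ) (Φ : ℕ → ℝ → ℝ) (i : ℕ) (x : ℝ) :
    qWronskian q (i+1) (fun c : Fin (i+1) => Φ ((c : ℕ)+1)) x = Wc q Φ i (i+1) x := by
  rw [qWronskian, Wc]
  congr 1
  ext r c
  by_cases h : (c : ℕ) < i
  · simp [h]
  · have hc : (c : ℕ) = i := by omega
    simp [h, hc]

lemma shift (q : ℝ) (hq1 : q ≠ 1) (f : ℝ → ℝ) (x : ℝ) (hx : x ≠ 0) :
    f (q * x) = f x + (x * (q - 1)) * qDeriv q f x := by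
  rw [qDeriv]
  have h1 : x * (q - 1) ≠ 0 := mul_ne_zero hx (sub_ne_zero.mpr hq1)
  field_simp
  ring

lemma shift_iter (q : ℝ) (hq1 : q ≠ 1) (f : ℝ → ℝ) (x : ℝ) (hx : x ≠ 0) (r : ℕ) :
    (qDeriv q)^[r] f (q * x) =
      (qDeriv q)^[r] f x + (x * (q - 1)) * (qDeriv q)^[r+1] f x := by
  rw [shift q hq1 ((qDeriv q)^[r] f) x hx, Function.iterate_succ_apply']

/-- The q-Jacobi identity for Wronskians. -/
lemma wronskian_jacobi (q : ℝ) (hq1 : q ≠ 1) (Φ : ℕ → ℝ → ℝ) (m j : ℕ)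
    (x : ℝ) (hx : x ≠ 0) :
    Wc q Φ m j (q*x) * Wc q Φ m (m+1) x - Wc q Φ m j x * Wc q Φ m (m+1) (q*x)
      = (x*(q-1)) * (qWronskian q m (fun c : Fin m => Φ ((c : ℕ)+1)) (q*x))
          * Wc q Φ (m+1) j x := by
  classical
  set t := x * (q - 1) with htdef
  have ht : t ≠ 0 := by
    simp only [htdef, mul_ne_zero_iff, sub_ne_zero]
    exact ⟨hx, hq1⟩
  set colf : Fin (m+2) → (ℝ → ℝ) := fun c => if (c : ℕ) < m+1 then Φ ((c : ℕ)+1) else Φ j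
    with hcolf
  set A : Matrix (Fin (m+2)) (Fin (m+2)) ℝ :=
    Matrix.of fun r c => (qDeriv q)^[(r : ℕ)] (colf c) x with hA
  set B : Matrix (Fin (m+1)) (Fin (m+2)) ℝ :=
    Matrix.of fun r c => (qDeriv q)^[(r : ℕ)] (colf c) (q * x) with hBdef
  have hB : ∀ r c, B r c = A r.castSucc c + t * A r.succ c := by
    intro r c
    simp only [hBdef, hA, Matrix.of_apply, Fin.coe_castSucc, Fin.val_succ]
    exact shift_iter q hq1 (colf c) x hx (r : ℕ)
  have hk := key_det m t ht A B hB
  have hcv : ∀ c : Fin (m+2), colf c = if (c : ℕ) < m + 1 then Φ ((c : ℕ)+1) else Φ j :=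
    fun _ => rfl
  have hsk1 : ∀ c : Fin (m+1), (c : ℕ) < m → ((skIdx m c : Fin (m+2)) : ℕ) = (c : ℕ) := by
    intro c h; simp [skIdx, h]
  have hsk2 : ∀ c : Fin (m+1), ¬ (c : ℕ) < m → ((skIdx m c : Fin (m+2)) : ℕ) = m + 1 := by
    intro c h; simp [skIdx, h, Fin.last]
  have d1 : (B.submatrix id (skIdx m)).det = Wc q Φ m j (q*x) := by
    rw [Wc]; congr 1; ext r c
    have hcg : colf (skIdx m c) = if (c : ℕ) < m then Φ ((c : ℕ)+1) else Φ j := by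
      by_cases h : (c : ℕ) < m
      · rw [hcv _, hsk1 c h, if_pos (by omega), if_pos h]
      · rw [hcv _, hsk2 c h, if_neg (by omega), if_neg h]
    simp only [Matrix.submatrix_apply, hBdef, Matrix.of_apply, id_eq, hcg]
  have d2 : (A.submatrix Fin.castSucc Fin.castSucc).det = Wc q Φ m (m+1) x := by
    rw [Wc]; congr 1; ext r c
    have hcg : colf c.castSucc = if (c : ℕ) < m then Φ ((c : ℕ)+1) else Φ (m+1) := by
      rw [hcv _, Fin.coe_castSucc, if_pos (by omega)]
      by_cases h : (c : ℕ) < m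
      · rw [if_pos h]
      · rw [if_neg h]
        have hc : (c : ℕ) = m := by omega
        rw [hc]
    simp only [Matrix.submatrix_apply, hA, Matrix.of_apply, hcg, Fin.coe_castSucc]
  have d3 : (A.submatrix Fin.castSucc (skIdx m)).det = Wc q Φ m j x := by
    rw [Wc]; congr 1; ext r c
    have hcg : colf (skIdx m c) = if (c : ℕ) < m then Φ ((c : ℕ)+1) else Φ j := by
      by_cases h : (c : ℕ) < m
      · rw [hcv _, hsk1 c h, if_pos (by omega), if_pos h]
      · rw [hcv _, hsk2 c h, if_neg (by omega), if_neg h]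
    simp only [Matrix.submatrix_apply, hA, Matrix.of_apply, hcg, Fin.coe_castSucc]
  have d4 : (B.submatrix id Fin.castSucc).det = Wc q Φ m (m+1) (q*x) := by
    rw [Wc]; congr 1; ext r c
    have hcg : colf c.castSucc = if (c : ℕ) < m then Φ ((c : ℕ)+1) else Φ (m+1) := by
      rw [hcv _, Fin.coe_castSucc, if_pos (by omega)]
      by_cases h : (c : ℕ) < m
      · rw [if_pos h]
      · rw [if_neg h]
        have hc : (c : ℕ) = m := by omega
        rw [hc]
    simp only [Matrix.submatrix_apply, hBdef, Matrix.of_apply, id_eq, hcg]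
  have d5 : A.det = Wc q Φ (m+1) j x := by
    rw [Wc]
  have d6 : (B.submatrix Fin.castSucc (fun k : Fin m => k.castSucc.castSucc)).det
      = qWronskian q m (fun c : Fin m => Φ ((c : ℕ)+1)) (q*x) := by
    rw [qWronskian]; congr 1; ext r c
    have hcg : colf c.castSucc.castSucc = Φ ((c : ℕ)+1) := by
      rw [hcv _, Fin.coe_castSucc, Fin.coe_castSucc, if_pos (by omega)]
    simp only [Matrix.submatrix_apply, hBdef, Matrix.of_apply, hcg, Fin.coe_castSucc]
  rw [d1, d2, d3, d4, d5, d6] at hk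
  linear_combination hk


lemma ratio (q : ℝ) (hq0 : q ≠ 0) (hq1 : q ≠ 1) (Φ : ℕ → ℝ → ℝ) :
    ∀ i : ℕ, (∀ k : ℕ, 1 ≤ k → k ≤ i → ∀ y : ℝ, y ≠ 0 →
        qWronskian q k (fun c : Fin k => Φ ((c : ℕ)+1)) y ≠ 0) →
      ∀ j : ℕ, ∀ x : ℝ, x ≠ 0 →
        qDarbouxFam q Φ i j x * qWronskian q i (fun c : Fin i => Φ ((c : ℕ)+1)) x
          = Wc q Φ i j x := by
  intro i
  induction i with
  | zero =>
    intro _ j x hx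
    rw [qDarbouxFam, qWronskian_zero, Wc_zero, mul_one]
  | succ i ih =>
    intro hnz j x hx
    have hqx : q * x ≠ 0 := mul_ne_zero hq0 hx
    have hWi : ∀ y : ℝ, y ≠ 0 → qWronskian q i (fun c : Fin i => Φ ((c : ℕ)+1)) y ≠ 0 := by
      rcases i with - | i'
      · intro y hy; rw [qWronskian_zero]; norm_num
      · intro y hy
        exact hnz (i'+1) (by omega) (by omega) y hy
    have hWi1 : ∀ y : ℝ, y ≠ 0 → qWronskian q (i+1) (fun c : Fin (i+1) => Φ ((c : ℕ)+1)) y ≠ 0 :=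
      fun y hy => hnz (i+1) (by omega) (by omega) y hy
    have ihyp : ∀ k : ℕ, 1 ≤ k → k ≤ i → ∀ y : ℝ, y ≠ 0 →
        qWronskian q k (fun c : Fin k => Φ ((c : ℕ)+1)) y ≠ 0 :=
      fun k h1 h2 y hy => hnz k h1 (by omega) y hy
    -- abbreviations
    set w1 := qWronskian q i (fun c : Fin i => Φ ((c : ℕ)+1)) x with hw1def
    set w2 := qWronskian q i (fun c : Fin i => Φ ((c : ℕ)+1)) (q*x) with hw2def
    set b1 := qWronskian q (i+1) (fun c : Fin (i+1) => Φ ((c : ℕ)+1)) x with hb1def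
    set b2 := qWronskian q (i+1) (fun c : Fin (i+1) => Φ ((c : ℕ)+1)) (q*x) with hb2def
    set a1 := Wc q Φ i j x with ha1def
    set a2 := Wc q Φ i j (q*x) with ha2def
    have hw1 : w1 ≠ 0 := hWi x hx
    have hw2 : w2 ≠ 0 := hWi (q*x) hqx
    have hb1 : b1 ≠ 0 := hWi1 x hx
    have hb2 : b2 ≠ 0 := hWi1 (q*x) hqx
    have e1 : qDarbouxFam q Φ i j x * w1 = a1 := ih ihyp j x hx
    have e2 : qDarbouxFam q Φ i j (q*x) * w2 = a2 := ih ihyp j (q*x) hqx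
    have e3 : qDarbouxFam q Φ i (i+1) x * w1 = b1 := by
      rw [hb1def, Wk_succ_eq_Wc]
      exact ih ihyp (i+1) x hx
    have e4 : qDarbouxFam q Φ i (i+1) (q*x) * w2 = b2 := by
      rw [hb2def, Wk_succ_eq_Wc]
      exact ih ihyp (i+1) (q*x) hqx
    have hh1 : qDarbouxFam q Φ i (i+1) x ≠ 0 := by
      intro h0; rw [h0, zero_mul] at e3; exact hb1 e3.symm
    have hh2 : qDarbouxFam q Φ i (i+1) (q*x) ≠ 0 := by
      intro h0; rw [h0, zero_mul] at e4; exact hb2 e4.symm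
    have hjac : a2 * Wc q Φ i (i+1) x - a1 * Wc q Φ i (i+1) (q*x)
        = (x*(q-1)) * w2 * Wc q Φ (i+1) j x :=
      wronskian_jacobi q hq1 Φ i j x hx
    rw [← Wk_succ_eq_Wc, ← hb1def, ← Wk_succ_eq_Wc, ← hb2def] at hjac
    -- now unfold the new level
    show qDarboux q (qDarbouxFam q Φ i (i+1)) (qDarbouxFam q Φ i j) x * b1 = Wc q Φ (i+1) j x
    have ht : x * (q - 1) ≠ 0 := mul_ne_zero hx (sub_ne_zero.mpr hq1)
    have hg1 : qDarbouxFam q Φ i j x = a1 / w1 := by rw [eq_div_iff hw1]; exact e1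
    have hg2 : qDarbouxFam q Φ i j (q*x) = a2 / w2 := by rw [eq_div_iff hw2]; exact e2
    have hh3 : qDarbouxFam q Φ i (i+1) x = b1 / w1 := by rw [eq_div_iff hw1]; exact e3
    have hh4 : qDarbouxFam q Φ i (i+1) (q*x) = b2 / w2 := by rw [eq_div_iff hw2]; exact e4
    have hW : Wc q Φ (i+1) j x = (a2*b1 - a1*b2)/((x*(q-1))*w2) := by
      rw [eq_div_iff (mul_ne_zero ht hw2)]
      linear_combination -hjac
    rw [qDarboux, qDeriv, hW]
    simp only [hg1, hg2, hh3, hh4]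
    field_simp

end DJaux

/-- The product of the successive Darboux-transformed generating functions telescopes to
the q-Wronskian: `φ_1^{(0)} φ_2^{(1)} ⋯ φ_n^{(n−1)} = W_n^q(φ_1,…,φ_n)`
(the τ function produced by `n` elementary gauge transformations from `τ = 1`). -/
theorem qDarboux_telescoping_product (q : ℝ) (hq0 : q ≠ 0) (hq1 : q ≠ 1)
    (n : ℕ) (hn : 1 ≤ n) (Φ : ℕ → ℝ → ℝ)
    (hW : ∀ i : ℕ, 1 ≤ i → i ≤ n → ∀ x : ℝ, x ≠ 0 →
      qWronskian q i (fun j : Fin i => Φ ((j : ℕ) + 1)) x ≠ 0) :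
    ∀ x : ℝ, x ≠ 0 →
      (∏ i ∈ Finset.range n, qDarbouxFam q Φ i (i + 1) x) =
        qWronskian q n (fun j : Fin n => Φ ((j : ℕ) + 1)) x := by
  intro x hx
  have main : ∀ m : ℕ, m ≤ n →
      (∏ i ∈ Finset.range m, qDarbouxFam q Φ i (i + 1) x)
        = qWronskian q m (fun c : Fin m => Φ ((c : ℕ) + 1)) x := by
    intro m
    induction m with
    | zero => intro _; simp [DJaux.qWronskian_zero]
    | succ m ihm =>
      intro hm
      rw [Finset.prod_range_succ, ihm (by omega), DJaux.Wk_succ_eq_Wc, mul_comm]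
      exact DJaux.ratio q hq0 hq1 Φ m
        (fun k h1 h2 y hy => hW k h1 (by omega) y hy) (m+1) x hx
  exact main n le_rfl
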